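/- Let f : ℝ^d → ℝ be ℓ-smooth and define f_r(θ) = E_{u ∼ Unif(B_d)}[f(θ + ru)]. Then f_r is differentiable and ‖∇f_r(θ) − ∇f(θ)‖ ≤ ℓr for every θ ∈ ℝ^d. -/

import Mathlib

open MeasureTheory

open InnerProductSpace
theorem ball_smoothing_gradient_bound {d : ℕ} (f : EuclideanSpace ℝ (Fin d) → ℝ) (ℓ r : ℝ)
    (hℓ : 0 ≤ ℓ) (hr : 0 < r)
    (hdiff : Differentiable ℝ f)
    (hlip : ∀ θ₁ θ₂, ‖gradient f θ₁ - gradient f θ₂‖ ≤ ℓ * ‖θ₁ - θ₂‖)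
    (μ : Measure (EuclideanSpace ℝ (Fin d)))
    (hμ : μ = (volume (Metric.closedBall (0 : EuclideanSpace ℝ (Fin d)) 1))⁻¹ •
      volume.restrict (Metric.closedBall (0 : EuclideanSpace ℝ (Fin d)) 1))
    (fr : EuclideanSpace ℝ (Fin d) → ℝ)
    (hfr : fr = fun θ => ∫ u, f (θ + r • u) ∂μ) :
    Differentiable ℝ fr ∧ ∀ θ, ‖gradient fr θ - gradient f θ‖ ≤ ℓ * r := by
  set B := Metric.closedBall (0 : EuclideanSpace ℝ (Fin d)) 1 with hB
  have hvol_pos : 0 < volume B := Metric.measure_closedBall_pos _ _ one_pos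
  have hvol_lt_top : volume B < ⊤ := (isCompact_closedBall _ _).measure_lt_top
  have hinv_ne_top : (volume B)⁻¹ ≠ ⊤ := by
    simp [ENNReal.inv_ne_top, hvol_pos.ne']
  have hprob : IsProbabilityMeasure μ := by
    constructor
    rw [hμ]
    simp only [Measure.smul_apply, Measure.restrict_apply MeasurableSet.univ,
      Set.univ_inter, smul_eq_mul]
    exact ENNReal.inv_mul_cancel hvol_pos.ne' hvol_lt_top.ne
  -- integrability of continuous functions against μ
  have hint : ∀ {X : Type} [NormedAddCommGroup X] (g : EuclideanSpace ℝ (Fin d) → X),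
      Continuous g → Integrable g μ := by
    intro X _ g hg
    rw [hμ]
    exact ((hg.continuousOn.integrableOn_compact (isCompact_closedBall _ _))).smul_measure
      hinv_ne_top
  have hmemB : ∀ᵐ u ∂μ, u ∈ B := by
    rw [hμ]
    exact Measure.ae_smul_measure (ae_restrict_mem Metric.isClosed_closedBall.measurableSet) _
  -- fderiv in terms of gradient
  have hfd : ∀ x, fderiv ℝ f x = toDual ℝ (EuclideanSpace ℝ (Fin d)) (gradient f x) := by
    intro x
    rw [gradient, LinearIsometryEquiv.apply_symm_apply]
  have hlipF : ∀ x y, ‖fderiv ℝ f x - fderiv ℝ f y‖ ≤ ℓ * ‖x - y‖ := by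
    intro x y
    rw [hfd, hfd, ← map_sub, LinearIsometryEquiv.norm_map]
    exact hlip x y
  have hcontF : Continuous (fderiv ℝ f) := by
    refine (LipschitzWith.of_dist_le_mul (K := ⟨ℓ, hℓ⟩) fun x y => ?_).continuous
    rw [dist_eq_norm, dist_eq_norm]
    exact hlipF x y
  have hcontG : Continuous (gradient f) := by
    have h : gradient f = fun x => (toDual ℝ (EuclideanSpace ℝ (Fin d))).symm (fderiv ℝ f x) := rfl
    rw [h]
    exact (toDual ℝ (EuclideanSpace ℝ (Fin d))).symm.continuous.comp hcontF
  have haff : ∀ θ : EuclideanSpace ℝ (Fin d), Continuous fun u => θ + r • u := fun θ =>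
    continuous_const.add (continuous_id.const_smul r)
  -- the key derivative computation
  have key : ∀ θ₀, HasFDerivAt fr (∫ u, fderiv ℝ f (θ₀ + r • u) ∂μ) θ₀ := by
    intro θ₀
    rw [hfr]
    apply hasFDerivAt_integral_of_dominated_of_fderiv_le
      (F' := fun θ u => fderiv ℝ f (θ + r • u))
      (bound := fun _ => ‖fderiv ℝ f θ₀‖ + ℓ * (1 + r)) (s := Metric.ball θ₀ 1) (Metric.ball_mem_nhds θ₀ one_pos)
    · exact Filter.Eventually.of_forall fun θ =>
        (hdiff.continuous.comp' (haff θ)).aestronglyMeasurable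
    · exact hint _ (hdiff.continuous.comp' (haff _))
    · exact (hcontF.comp' (haff _)).aestronglyMeasurable
    · refine hmemB.mono fun u hu θ hθ => ?_
      have h1 : ‖fderiv ℝ f (θ + r • u) - fderiv ℝ f θ₀‖ ≤ ℓ * (1 + r) := by
        refine (hlipF _ _).trans ?_
        gcongr
        have h0 : θ + r • u - θ₀ = (θ - θ₀) + r • u := by abel
        rw [h0]
        refine (norm_add_le _ _).trans ?_
        have h2 : ‖θ - θ₀‖ ≤ 1 := le_of_lt (by simpa [dist_eq_norm] using hθ)
        have h3 : ‖r • u‖ ≤ r := by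
          rw [norm_smul, Real.norm_eq_abs, abs_of_pos hr]
          have h4 := Metric.mem_closedBall.mp hu
          rw [dist_zero_right] at h4
          nlinarith
        linarith
      calc ‖fderiv ℝ f (θ + r • u)‖
          ≤ ‖fderiv ℝ f θ₀‖ + ‖fderiv ℝ f (θ + r • u) - fderiv ℝ f θ₀‖ := by
            simpa using norm_add_le (fderiv ℝ f θ₀) (fderiv ℝ f (θ + r • u) - fderiv ℝ f θ₀)
        _ ≤ ‖fderiv ℝ f θ₀‖ + ℓ * (1 + r) := by linarith
    · exact integrable_const _
    · refine Filter.Eventually.of_forall fun u θ _ => ?_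
      have h5 := ((hdiff (θ + r • u)).hasFDerivAt).comp θ ((hasFDerivAt_id θ).add_const (r • u))
      simpa [Function.comp_def] using h5
  have keyG : ∀ θ₀, HasGradientAt fr (∫ u, gradient f (θ₀ + r • u) ∂μ) θ₀ := by
    intro θ₀
    rw [hasGradientAt_iff_hasFDerivAt]
    have hcomm : ∫ u, fderiv ℝ f (θ₀ + r • u) ∂μ
        = toDual ℝ (EuclideanSpace ℝ (Fin d)) (∫ u, gradient f (θ₀ + r • u) ∂μ) := by
      have h6 : ∀ u : EuclideanSpace ℝ (Fin d), fderiv ℝ f (θ₀ + r • u) =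
          (toDual ℝ (EuclideanSpace ℝ (Fin d))).toLinearIsometry (gradient f (θ₀ + r • u)) :=
        fun u => by rw [hfd]; rfl
      simp_rw [h6]
      rw [LinearIsometry.integral_comp_comm]
      rfl
    rw [← hcomm]
    exact key θ₀
  constructor
  · exact fun θ => (key θ).differentiableAt
  · intro θ
    rw [(keyG θ).gradient]
    have hgint : Integrable (fun u => gradient f (θ + r • u)) μ :=
      hint _ (hcontG.comp' (haff _))
    have hconst : (gradient f θ) = ∫ _u, gradient f θ ∂μ := by
      rw [integral_const]; simp
    rw [hconst, ← integral_sub hgint (integrable_const _)]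
    have hle := norm_integral_le_of_norm_le_const (μ := μ) (C := ℓ * r)
      (f := fun u => gradient f (θ + r • u) - gradient f θ)
      (hmemB.mono fun u hu => ?_)
    · simpa [measure_univ] using hle
    · have h1 : θ + r • u - θ = r • u := by abel
      refine le_trans (by simpa [h1] using hlip (θ + r • u) θ) ?_
      rw [norm_smul, Real.norm_eq_abs, abs_of_pos hr]
      have h2 : ‖u‖ ≤ 1 := by simpa [dist_zero_right] using Metric.mem_closedBall.mp hu
      nlinarith [norm_nonneg u, mul_nonneg hℓ hr.le]
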